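/- Let φ : ℝ × ℝ → ℝ be C¹ and ψ : ℝ × ℝ → ℝ be arbitrary, and define v : ℝ³ → ℝ by v(x,y,z) = ∫₀ˣ φ(t, t·y − z) dt + ψ(y,z). Then ∂_x v(x,y,z) = φ(x, x·y − z) at every point, and v satisfies the equation X₂(X₁v) = 0 at every point; explicitly, ∂_y(∂_x v)(x,y,z) + x·∂_z(∂_x v)(x,y,z) = 0. (This gives the complete solution v of the transformed Dini equation, with φ solving X₂φ = 0 along characteristics and ψ solving X₁ψ = 0.) -/

import Mathlib

open MeasureTheory

/-- Partial derivative in the first coordinate of a function on `ℝ³`. -/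
noncomputable def pdx (u : ℝ × ℝ × ℝ → ℝ) : ℝ × ℝ × ℝ → ℝ :=
  fun p => deriv (fun t => u (t, p.2.1, p.2.2)) p.1

/-- Partial derivative in the second coordinate of a function on `ℝ³`. -/
noncomputable def pdy (u : ℝ × ℝ × ℝ → ℝ) : ℝ × ℝ × ℝ → ℝ :=
  fun p => deriv (fun t => u (p.1, t, p.2.2)) p.2.1

/-- Partial derivative in the third coordinate of a function on `ℝ³`. -/
noncomputable def pdz (u : ℝ × ℝ × ℝ → ℝ) : ℝ × ℝ × ℝ → ℝ :=
  fun p => deriv (fun t => u (p.1, p.2.1, t)) p.2.2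

/-- Complete solution of the transformed Dini equation:
`v(x,y,z) = ∫₀ˣ φ(t, t·y − z) dt + ψ(y,z)` satisfies `∂_x v = φ(x, xy − z)` and
`X₂(X₁ v) = ∂_y(∂_x v) + x·∂_z(∂_x v) = 0`. -/
theorem dini_complete_solution (φ : ℝ × ℝ → ℝ) (hφ : ContDiff ℝ 1 φ)
    (ψ : ℝ × ℝ → ℝ) (v : ℝ × ℝ × ℝ → ℝ)
    (hv : ∀ p : ℝ × ℝ × ℝ,
      v p = (∫ t in (0:ℝ)..p.1, φ (t, t * p.2.1 - p.2.2)) + ψ (p.2.1, p.2.2)) :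
    (∀ p : ℝ × ℝ × ℝ, pdx v p = φ (p.1, p.1 * p.2.1 - p.2.2)) ∧
    (∀ p : ℝ × ℝ × ℝ, pdy (pdx v) p + p.1 * pdz (pdx v) p = 0) := by
  have hφc : Continuous φ := hφ.continuous
  have hφd : Differentiable ℝ φ := hφ.differentiable one_ne_zero
  have h1 : ∀ p : ℝ × ℝ × ℝ, pdx v p = φ (p.1, p.1 * p.2.1 - p.2.2) := by
    rintro ⟨x, y, z⟩
    have hfun : (fun t => v (t, y, z)) =
        fun t => (∫ s in (0:ℝ)..t, φ (s, s * y - z)) + ψ (y, z) := by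
      funext t; exact hv (t, y, z)
    have hcont : Continuous fun s => φ (s, s * y - z) :=
      hφc.comp (by continuity)
    simp only [pdx, hfun]
    rw [deriv_add_const]
    exact hcont.deriv_integral _ 0 x
  refine ⟨h1, ?_⟩
  rintro ⟨x, y, z⟩
  have hpdx : pdx v = fun p => φ (p.1, p.1 * p.2.1 - p.2.2) := funext h1
  -- derivative in y
  have hy : HasDerivAt (fun t : ℝ => φ (x, x * t - z))
      (fderiv ℝ φ (x, x * y - z) (0, x)) y := by
    have hin : HasDerivAt (fun t : ℝ => ((x, x * t - z) : ℝ × ℝ)) (0, x) y := by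
      have : HasDerivAt (fun t : ℝ => x * t - z) x y := by
        simpa using ((hasDerivAt_id y).const_mul x).sub_const z
      exact HasDerivAt.prodMk (hasDerivAt_const y x) this
    exact ((hφd (x, x * y - z)).hasFDerivAt.comp_hasDerivAt y hin)
  have hz : HasDerivAt (fun t : ℝ => φ (x, x * y - t))
      (fderiv ℝ φ (x, x * y - z) (0, -1)) z := by
    have hin : HasDerivAt (fun t : ℝ => ((x, x * y - t) : ℝ × ℝ)) (0, -1) z := by
      have : HasDerivAt (fun t : ℝ => x * y - t) (-1) z := by
        simpa using (hasDerivAt_id z).const_sub (x * y)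
      exact HasDerivAt.prodMk (hasDerivAt_const z x) this
    exact ((hφd (x, x * y - z)).hasFDerivAt.comp_hasDerivAt z hin)
  have e1 : pdy (pdx v) (x, y, z) = fderiv ℝ φ (x, x * y - z) (0, x) := by
    simp only [pdy, hpdx]; exact hy.deriv
  have e2 : pdz (pdx v) (x, y, z) = fderiv ℝ φ (x, x * y - z) (0, -1) := by
    simp only [pdz, hpdx]; exact hz.deriv
  rw [e1, e2]
  have hlin : fderiv ℝ φ (x, x * y - z) (0, x) =
      x * -(fderiv ℝ φ (x, x * y - z) (0, -1)) := by
    have : ((0, x) : ℝ × ℝ) = x • ((0, 1) : ℝ × ℝ) := by simp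
    rw [this, (fderiv ℝ φ (x, x * y - z)).map_smul]
    have h2 : ((0, -1) : ℝ × ℝ) = -((0, 1) : ℝ × ℝ) := by simp
    rw [h2, (fderiv ℝ φ (x, x * y - z)).map_neg, smul_eq_mul]
    ring
  rw [hlin]; ring
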